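/- If λ ∈ [0,1], a > b > 0 are real numbers, and z ∈ ℂ with |z| < b, then λ·Re(z²/(a(a−z))) − Re(z²/(b(b−z))) ≥ λ·|z|²/(a(a−|z|)) − |z|²/(b(b−|z|)). -/

import Mathlib

/-- If λ ∈ [0,1], a > b > 0 and |z| < b, then
λ·Re(z²/(a(a−z))) − Re(z²/(b(b−z))) ≥ λ·|z|²/(a(a−|z|)) − |z|²/(b(b−|z|)). -/
theorem lemma_minus (lam a b : ℝ) (hlam0 : 0 ≤ lam) (hlam1 : lam ≤ 1)
    (hab : b < a) (hb : 0 < b) (z : ℂ) (hz : ‖z‖ < b) :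
    lam * ‖z‖ ^ 2 / (a * (a - ‖z‖))
      - ‖z‖ ^ 2 / (b * (b - ‖z‖))
    ≤ lam * (z ^ 2 / ((a : ℂ) * ((a : ℂ) - z))).re - (z ^ 2 / ((b : ℂ) * ((b : ℂ) - z))).re := by
  set r := ‖z‖ with hr
  have hr0 : 0 ≤ r := norm_nonneg z
  have ha : 0 < a := hb.trans hab
  have hrb : r < b := hz
  have hra : r < a := hrb.trans hab
  have har : (0:ℝ) < a - r := by linarith
  have hbr : (0:ℝ) < b - r := by linarith
  have harne : a - r ≠ 0 := har.ne'
  have hbrne : b - r ≠ 0 := hbr.ne'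
  have hane : a ≠ 0 := ha.ne'
  have hbne : b ≠ 0 := hb.ne'
  -- lower bounds on |a - z|, |b - z|
  have hA : a - r ≤ ‖(a:ℂ) - z‖ := by
    have := norm_sub_norm_le (a:ℂ) z
    simpa [Complex.norm_real, Real.norm_eq_abs, abs_of_pos ha] using this
  have hB : b - r ≤ ‖(b:ℂ) - z‖ := by
    have := norm_sub_norm_le (b:ℂ) z
    simpa [Complex.norm_real, Real.norm_eq_abs, abs_of_pos hb] using this
  have hApos : (0:ℝ) < ‖(a:ℂ) - z‖ := lt_of_lt_of_le har hA
  have hBpos : (0:ℝ) < ‖(b:ℂ) - z‖ := lt_of_lt_of_le hbr hB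
  have hAne : (a:ℂ) - z ≠ 0 := by
    intro h; rw [h] at hApos; simp at hApos
  have hBne : (b:ℂ) - z ≠ 0 := by
    intro h; rw [h] at hBpos; simp at hBpos
  have haC : (a:ℂ) ≠ 0 := by exact_mod_cast ha.ne'
  have hbC : (b:ℂ) ≠ 0 := by exact_mod_cast hb.ne'
  set Fa := (z ^ 2 / ((a : ℂ) * ((a : ℂ) - z))).re with hFa
  set Fb := (z ^ 2 / ((b : ℂ) * ((b : ℂ) - z))).re with hFb
  set Ga := r ^ 2 / (a * (a - r)) with hGa
  set Gb := r ^ 2 / (b * (b - r)) with hGb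
  set X := ‖(a:ℂ) - z‖ with hX
  set Y := ‖(b:ℂ) - z‖ with hY
  -- Step 1: Fa ≤ Ga
  have step1 : Fa ≤ Ga := by
    have h1 : Fa ≤ ‖z ^ 2 / ((a : ℂ) * ((a : ℂ) - z))‖ :=
      Complex.re_le_norm _
    have h2 : ‖z ^ 2 / ((a : ℂ) * ((a : ℂ) - z))‖ = r ^ 2 / (a * X) := by
      simp [norm_div, norm_mul, norm_pow, Complex.norm_real, Real.norm_eq_abs, abs_of_pos ha, hr, hX]
    have h3 : r ^ 2 / (a * X) ≤ r ^ 2 / (a * (a - r)) := by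
      apply div_le_div_of_nonneg_left (by positivity) (by positivity)
      nlinarith
    calc Fa ≤ _ := h1
      _ = _ := h2
      _ ≤ Ga := h3
  -- Step 3: Fb - Fa ≤ Gb - Ga
  have step3 : Fb - Fa ≤ Gb - Ga := by
    have hid : z ^ 2 / ((b : ℂ) * ((b : ℂ) - z)) - z ^ 2 / ((a : ℂ) * ((a : ℂ) - z))
        = z ^ 2 * ((a:ℂ) - b) * ((a:ℂ) + b - z) / (((a:ℂ) * b) * (((a:ℂ) - z) * ((b:ℂ) - z))) := by
      field_simp
      ring
    have hre : Fb - Fa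
        = (z ^ 2 * ((a:ℂ) - b) * ((a:ℂ) + b - z) / (((a:ℂ) * b) * (((a:ℂ) - z) * ((b:ℂ) - z)))).re := by
      rw [hFb, hFa, ← Complex.sub_re, hid]
    set T := ‖(a:ℂ) + b - z‖ with hT
    have habs : ‖z ^ 2 * ((a:ℂ) - b) * ((a:ℂ) + b - z)
          / (((a:ℂ) * b) * (((a:ℂ) - z) * ((b:ℂ) - z)))‖
        = r ^ 2 * (a - b) * T / ((a * b) * (X * Y)) := by
      have hcast : ((a:ℂ) - b) = ((a - b : ℝ) : ℂ) := by push_cast; ring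
      rw [hcast]
      rw [norm_div, norm_mul, norm_mul, norm_mul, norm_mul, norm_pow, Complex.norm_real,
        Complex.norm_real, Complex.norm_real, Real.norm_eq_abs, Real.norm_eq_abs, Real.norm_eq_abs,
        abs_of_pos ha, abs_of_pos hb, abs_of_pos (show (0:ℝ) < a - b by linarith), norm_mul]
    have htri : T ≤ X + Y + r := by
      calc T = ‖(((a:ℂ) - z) + ((b:ℂ) - z)) + z‖ := by
            rw [hT]; ring_nf
        _ ≤ ‖((a:ℂ) - z) + ((b:ℂ) - z)‖ + r := norm_add_le _ _
        _ ≤ X + Y + r := by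
            have := norm_add_le ((a:ℂ) - z) ((b:ℂ) - z)
            linarith
    have key : (X + Y + r) / (X * Y) ≤ (a + b - r) / ((a - r) * (b - r)) := by
      rw [div_le_div_iff₀ (by positivity) (by positivity)]
      nlinarith [mul_nonneg (sub_nonneg.mpr hA) (sub_nonneg.mpr hB),
        mul_nonneg hr0 (mul_nonneg hApos.le hBpos.le),
        mul_nonneg (mul_nonneg har.le hApos.le) (sub_nonneg.mpr hB),
        mul_nonneg (mul_nonneg hbr.le hBpos.le) (sub_nonneg.mpr hA)]
    have hGdiff : Gb - Ga = (r ^ 2 * (a - b) / (a * b)) * ((a + b - r) / ((a - r) * (b - r))) := by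
      rw [hGb, hGa]
      field_simp
      ring
    have hsplit : r ^ 2 * (a - b) * T / ((a * b) * (X * Y))
        = (r ^ 2 * (a - b) / (a * b)) * (T / (X * Y)) := by
      rw [div_mul_div_comm]
    have hmono1 : T / (X * Y) ≤ (X + Y + r) / (X * Y) := by
      gcongr
    have hfinal : r ^ 2 * (a - b) * T / ((a * b) * (X * Y)) ≤ Gb - Ga := by
      rw [hsplit, hGdiff]
      have hc : (0:ℝ) ≤ r ^ 2 * (a - b) / (a * b) :=
        div_nonneg (mul_nonneg (sq_nonneg r) (by linarith)) (by positivity)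
      exact mul_le_mul_of_nonneg_left (hmono1.trans key) hc
    calc Fb - Fa = _ := hre
      _ ≤ ‖_‖ := Complex.re_le_norm _
      _ = r ^ 2 * (a - b) * T / ((a * b) * (X * Y)) := habs
      _ ≤ Gb - Ga := hfinal
  -- Combine
  have hGa' : lam * r ^ 2 / (a * (a - r)) = lam * Ga := by
    rw [hGa]; ring
  rw [hGa']
  nlinarith [mul_nonneg (sub_nonneg.mpr hlam1) (sub_nonneg.mpr step1)]
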